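/- Let X be a Banach space, f : ℝⁿ → X strongly measurable, and 0 < λ ≤ κ < 1/2. Then for any quasi-optimal center of oscillation c_κ(f;Q) of f on a cube Q, one has (‖f − c_κ(f;Q)‖_X χ_Q)*(λ|Q|) ≤ 4·ω_λ(f;Q). -/

import Mathlib

open MeasureTheory ENNReal Filter

/-- An axis-parallel cube in `ℝⁿ`, given by its lower-left corner and (positive) side length. -/
structure DyCube (n : ℕ) where
  corner : Fin n → ℝ
  side : ℝ
  side_pos : 0 < side

namespace DyCube

/-- The set of points of a cube (half-open, so that dyadic children tile it exactly). -/
def set {n : ℕ} (Q : DyCube n) : Set (Fin n → ℝ) :=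
  Set.univ.pi fun i => Set.Ico (Q.corner i) (Q.corner i + Q.side)

/-- `P.IsDyadicSub Q` : `P` is a dyadic subcube of `Q`, obtained by `k` successive
dyadic subdivisions of `Q`. -/
def IsDyadicSub {n : ℕ} (P Q : DyCube n) : Prop :=
  ∃ k : ℕ, ∃ m : Fin n → ℕ, (∀ i, m i < 2 ^ k) ∧ P.side = Q.side / 2 ^ k ∧
    ∀ i, P.corner i = Q.corner i + m i * (Q.side / 2 ^ k)

end DyCube

/-- `Ω_k`, the union of the cubes of the `k`-th generation of a family. -/
def genUnion {n : ℕ} (F : ℕ → Set (DyCube n)) (k : ℕ) : Set (Fin n → ℝ) :=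
  ⋃ P ∈ F k, P.set

/-- A contracting family of dyadic subcubes of `Q`: generations `F k` of pairwise disjoint
dyadic subcubes, starting from `F 0 = {Q}`, with decreasing unions whose measures tend to `0`. -/
structure ContractingFamily {n : ℕ} (Q : DyCube n) (F : ℕ → Set (DyCube n)) : Prop where
  zero : F 0 = {Q}
  dyadic : ∀ k, ∀ P ∈ F k, P.IsDyadicSub Q
  disj : ∀ k, (F k).PairwiseDisjoint DyCube.set
  nested : ∀ k, genUnion F (k + 1) ⊆ genUnion F k
  vanish : Tendsto (fun k => volume (genUnion F k)) atTop (nhds 0)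

/-- An `η`-sparse family: a contracting family such that each cube `P ∈ F k` satisfies
`|E_P| ≥ η |P|`, where `E_P = P \ Ω_{k+1}`. -/
def IsSparseFamily {n : ℕ} (η : ℝ) (Q : DyCube n) (F : ℕ → Set (DyCube n)) : Prop :=
  ContractingFamily Q F ∧
    ∀ k, ∀ P ∈ F k, ENNReal.ofReal η * volume P.set ≤ volume (P.set \ genUnion F (k + 1))

/-- The nonincreasing rearrangement of an `ℝ≥0∞`-valued function with respect to a measure. -/
noncomputable def rearrE {α : Type*} [MeasurableSpace α] (μ : Measure α) (g : α → ℝ≥0∞)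
    (t : ℝ≥0∞) : ℝ≥0∞ :=
  sInf {a : ℝ≥0∞ | μ {x | a < g x} ≤ t}

/-- The local mean oscillation `ω_λ(f;Q) = inf_{c ∈ X} (‖f − c‖_X χ_Q)^*(λ|Q|)`. -/
noncomputable def locMeanOsc {n : ℕ} {X : Type*} [NormedAddCommGroup X]
    (f : (Fin n → ℝ) → X) (Q : DyCube n) (lam : ℝ) : ℝ≥0∞ :=
  ⨅ c : X, rearrE volume (fun x => Q.set.indicator (fun y => ENNReal.ofReal ‖f y - c‖) x)
    (ENNReal.ofReal lam * volume Q.set)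


private lemma rearrE_anti {α : Type*} [MeasurableSpace α] (μ : Measure α) (g : α → ℝ≥0∞)
    {s t : ℝ≥0∞} (h : s ≤ t) : rearrE μ g t ≤ rearrE μ g s :=
  sInf_le_sInf fun _ ha => le_trans ha h

private lemma exists_thresh {α : Type*} [MeasurableSpace α] {μ : Measure α} {g : α → ℝ≥0∞}
    {t y : ℝ≥0∞} (h : rearrE μ g t < y) : ∃ a < y, μ {x | a < g x} ≤ t := by
  obtain ⟨a, ha, hay⟩ := sInf_lt_iff.mp h
  exact ⟨a, hay, ha⟩

/-- Quasi-optimal centers of oscillation: if `0 < λ ≤ κ < 1/2` and `c` is a quasi-optimal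
center of oscillation at level `κ` (i.e. `(‖f − c‖χ_Q)^*(κ|Q|) ≤ 2 ω_κ(f;Q)`), then
`(‖f − c‖χ_Q)^*(λ|Q|) ≤ 4 ω_λ(f;Q)`. -/
theorem stmt12 {n : ℕ} {X : Type*} [NormedAddCommGroup X] [NormedSpace ℝ X] [CompleteSpace X]
    (f : (Fin n → ℝ) → X) (hf : AEStronglyMeasurable f volume) (Q : DyCube n)
    (lam κ : ℝ) (hlam : 0 < lam) (hlamκ : lam ≤ κ) (hκ : κ < 1 / 2) (c : X)
    (hc : rearrE volume (fun x => Q.set.indicator (fun y => ENNReal.ofReal ‖f y - c‖) x)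
        (ENNReal.ofReal κ * volume Q.set) ≤ 2 * locMeanOsc f Q κ) :
    rearrE volume (fun x => Q.set.indicator (fun y => ENNReal.ofReal ‖f y - c‖) x)
        (ENNReal.ofReal lam * volume Q.set) ≤ 4 * locMeanOsc f Q lam := by
  set g : X → (Fin n → ℝ) → ℝ≥0∞ := fun c₀ x =>
    Q.set.indicator (fun y => ENNReal.ofReal ‖f y - c₀‖) x with hg
  set V := volume Q.set with hVdef
  have hVeq : V = ENNReal.ofReal Q.side ^ n := by
    simp [hVdef, DyCube.set, volume_pi_pi, Real.volume_Ico]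
  have hV0 : V ≠ 0 := by
    rw [hVeq]
    exact pow_ne_zero _ (ENNReal.ofReal_pos.mpr Q.side_pos).ne'
  have hVtop : V ≠ ⊤ := by
    rw [hVeq]; exact ENNReal.pow_ne_top ENNReal.ofReal_ne_top
  set ω := locMeanOsc f Q lam with hωdef
  -- bound at level κ by level lam
  have hκω : locMeanOsc f Q κ ≤ ω := by
    refine iInf_mono fun c₀ => rearrE_anti _ _ ?_
    exact mul_le_mul_left (ENNReal.ofReal_le_ofReal hlamκ) _
  refine ENNReal.le_of_forall_pos_le_add fun ε hε h4top => ?_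
  have hω : ω < ⊤ := lt_of_le_of_lt (by
    calc ω = 1 * ω := (one_mul ω).symm
    _ ≤ 4 * ω := mul_le_mul_left (by norm_num) ω) h4top
  set ε' : ℝ≥0∞ := (ε : ℝ≥0∞) / 5 with hε'def
  have hε'0 : ε' ≠ 0 := by
    simp [hε'def, ENNReal.div_eq_zero_iff, hε.ne']
  have hε'top : ε' ≠ ⊤ := by
    simp [hε'def, ENNReal.div_eq_top]
  -- choose a near-optimal center c' at level lam
  have : ω < ω + ε' := ENNReal.lt_add_right hω.ne hε'0
  rw [hωdef, locMeanOsc] at this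
  rw [iInf_lt_iff] at this
  obtain ⟨c', hc'⟩ := this
  set R' := rearrE volume (g c') (ENNReal.ofReal lam * V) with hR'def
  have hR' : R' < ω + ε' := hc'
  have hR'top : R' < ⊤ := hR'.trans_le le_top |>.trans_le le_top
  -- A = rearr of g c at κ|Q|
  set A := rearrE volume (g c) (ENNReal.ofReal κ * V) with hAdef
  have hA : A ≤ 2 * ω := le_trans hc (mul_le_mul_right hκω 2)
  have hAtop : A < ⊤ := lt_of_le_of_lt hA (by
    exact ENNReal.mul_lt_top (by norm_num) hω)
  set B := rearrE volume (g c') (ENNReal.ofReal κ * V) with hBdef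
  have hB : B ≤ R' := rearrE_anti _ _ (mul_le_mul_left (ENNReal.ofReal_le_ofReal hlamκ) _)
  -- thresholds
  obtain ⟨a, haA, ha⟩ := exists_thresh (ENNReal.lt_add_right hAtop.ne hε'0)
  obtain ⟨b, hbB, hb⟩ := exists_thresh (g := g c')
    (show B < R' + ε' from lt_of_le_of_lt hB (ENNReal.lt_add_right hR'top.ne hε'0))
  obtain ⟨a', ha'R, ha'⟩ := exists_thresh (g := g c')
    (show R' < R' + ε' from ENNReal.lt_add_right hR'top.ne hε'0)
  -- find a common good point in Q
  have hsub : ∀ c₀ a₀, {x | a₀ < g c₀ x} ⊆ Q.set := by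
    intro c₀ a₀ x hx
    by_contra hxQ
    simp only [Set.mem_setOf_eq, hg, Set.indicator_of_notMem hxQ] at hx
    exact (ENNReal.not_lt_zero hx).elim
  have hgood : ∃ x ∈ Q.set, g c x ≤ a ∧ g c' x ≤ b := by
    by_contra hcon
    push_neg at hcon
    have hcover : Q.set ⊆ {x | a < g c x} ∪ {x | b < g c' x} := by
      intro x hx
      rcases le_or_gt (g c x) a with h1 | h1
      · exact Or.inr (hcon x hx h1)
      · exact Or.inl h1
    have : V ≤ ENNReal.ofReal (2 * κ) * V := by
      calc V ≤ volume ({x | a < g c x} ∪ {x | b < g c' x}) := measure_mono hcover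
      _ ≤ volume {x | a < g c x} + volume {x | b < g c' x} := measure_union_le _ _
      _ ≤ ENNReal.ofReal κ * V + ENNReal.ofReal κ * V := add_le_add ha hb
      _ = (ENNReal.ofReal κ + ENNReal.ofReal κ) * V := (add_mul _ _ _).symm
      _ = ENNReal.ofReal (2 * κ) * V := by
          rw [← ENNReal.ofReal_add (by linarith) (by linarith)]; ring_nf
    have hlt : ENNReal.ofReal (2 * κ) * V < 1 * V := by
      refine ENNReal.mul_lt_mul_left hV0 hVtop ?_
      exact ENNReal.ofReal_lt_one.mpr (by linarith)
    rw [one_mul] at hlt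
    exact absurd (lt_of_le_of_lt this hlt) (lt_irrefl V)
  obtain ⟨x, hxQ, hxa, hxb⟩ := hgood
  -- bound ‖c - c'‖
  set d : ℝ≥0∞ := ENNReal.ofReal ‖c - c'‖ with hddef
  have hdtop : d ≠ ⊤ := ENNReal.ofReal_ne_top
  have hgx : g c x = ENNReal.ofReal ‖f x - c‖ := by
    simp [hg, Set.indicator_of_mem hxQ]
  have hgx' : g c' x = ENNReal.ofReal ‖f x - c'‖ := by
    simp [hg, Set.indicator_of_mem hxQ]
  have hd : d ≤ a + b := by
    have hnorm : ‖c - c'‖ ≤ ‖f x - c‖ + ‖f x - c'‖ := by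
      have : c - c' = (f x - c') - (f x - c) := by abel
      rw [this]
      exact (norm_sub_le _ _).trans (by rw [norm_sub_rev (f x) c]; ring_nf; rfl)
    calc d ≤ ENNReal.ofReal (‖f x - c‖ + ‖f x - c'‖) := ENNReal.ofReal_le_ofReal hnorm
    _ = ENNReal.ofReal ‖f x - c‖ + ENNReal.ofReal ‖f x - c'‖ :=
        ENNReal.ofReal_add (norm_nonneg _) (norm_nonneg _)
    _ ≤ a + b := add_le_add (hgx ▸ hxa) (hgx' ▸ hxb)
  -- pointwise comparison g c ≤ g c' + d
  have hpw : ∀ y, g c y ≤ g c' y + d := by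
    intro y
    by_cases hy : y ∈ Q.set
    · simp only [hg, Set.indicator_of_mem hy]
      rw [hddef, ← ENNReal.ofReal_add (norm_nonneg _) (norm_nonneg _)]
      refine ENNReal.ofReal_le_ofReal ?_
      have : f y - c = (f y - c') + (c' - c) := by abel
      rw [this]
      exact (norm_add_le _ _).trans (by rw [norm_sub_rev c' c])
    · simp [hg, Set.indicator_of_notMem hy]
  -- conclude
  have hincl : {y | a' + d < g c y} ⊆ {y | a' < g c' y} := by
    intro y hy
    have : a' + d < g c' y + d := lt_of_lt_of_le hy (hpw y)
    exact (ENNReal.add_lt_add_iff_right hdtop).mp this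
  have hfinal : rearrE volume (g c) (ENNReal.ofReal lam * V) ≤ a' + d :=
    sInf_le (le_trans (measure_mono hincl) ha')
  have harith : a' + d ≤ 4 * ω + 5 * ε' := by
    have h1 : a' ≤ ω + ε' + ε' := le_trans ha'R.le (add_le_add_left hR'.le ε')
    have h2 : a ≤ 2 * ω + ε' := le_trans haA.le (add_le_add_left hA ε')
    have h3 : b ≤ ω + ε' + ε' := le_trans hbB.le
      (add_le_add_left hR'.le ε')
    calc a' + d ≤ (ω + ε' + ε') + ((2 * ω + ε') + (ω + ε' + ε')) :=
        add_le_add h1 (le_trans hd (add_le_add h2 h3))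
    _ = 4 * ω + 5 * ε' := by ring
  have hε5 : 5 * ε' = (ε : ℝ≥0∞) := by
    rw [hε'def, mul_comm]
    exact ENNReal.div_mul_cancel (by norm_num) (by norm_num)
  have : rearrE volume (g c) (ENNReal.ofReal lam * V) ≤ 4 * ω + (ε : ℝ≥0∞) := by
    rw [← hε5]; exact le_trans hfinal harith
  exact this
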